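/- arXiv:2605.09590 — 2 statements merged into one kernel-verified Lean document; each statement's English description precedes it below -/
import Mathlib

section
/- Let Σ be an n×n complex Hermitian matrix and v a random vector with i.i.d. entries satisfying E[v_k]=0, E[v_k²]=0, E[|v_k|²]=1, and E[|v_k|⁴]=κ. Then the variance of the single-sample diagonal estimator δ_k(v) = conj(v_k)·(Σ v)_k is Var[δ_k] = (κ−1)·|Σ_{kk}|² + ∑_{ℓ≠k} |Σ_{kℓ}|². -/
open MeasureTheory ProbabilityTheory Finset

lemma indep_integral_mul_complex {Ω : Type*} [MeasurableSpace Ω] {μ : Measure Ω}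
    [IsProbabilityMeasure μ] {X Y : Ω → ℂ} (h : IndepFun X Y μ)
    (hX : AEMeasurable X μ) (hY : AEMeasurable Y μ) :
    ∫ ω, X ω * Y ω ∂μ = (∫ ω, X ω ∂μ) * ∫ ω, Y ω ∂μ := by
  have hmap := (indepFun_iff_map_prod_eq_prod_map_map hX hY).mp h
  have h1 : ∫ ω, X ω * Y ω ∂μ = ∫ p : ℂ × ℂ, p.1 * p.2 ∂(μ.map (fun ω => (X ω, Y ω))) := by
    rw [integral_map (hX.prodMk hY) (by fun_prop)]
  rw [h1, hmap, integral_prod_mul (fun x : ℂ => x) (fun x : ℂ => x),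
    integral_map (f := fun x : ℂ => x) hX measurable_id.aestronglyMeasurable,
    integral_map (f := fun x : ℂ => x) hY measurable_id.aestronglyMeasurable]

lemma conj_mul_self_complex (z : ℂ) : (starRingEnd ℂ) z * z = ((‖z‖^2 : ℝ) : ℂ) := by
  rw [RCLike.conj_mul]; norm_cast

/-- Single-sample variance of the stochastic diagonal estimator for a complex
Hermitian matrix with i.i.d. probe entries having the stated moments:
`Var[δ_k] = (κ - 1) * |Σ_kk|² + ∑_{ℓ ≠ k} |Σ_kℓ|²`. -/
theorem pico_single_sample_variance
    {Ω : Type*} [MeasurableSpace Ω] {μ : Measure Ω} [IsProbabilityMeasure μ]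
    {n : ℕ} (S : Matrix (Fin n) (Fin n) ℂ) (hS : S.IsHermitian)
    (v : Ω → Fin n → ℂ) (κ : ℝ)
    (hmeas : ∀ k, Measurable fun ω => v ω k)
    (hindep : iIndepFun (fun k ω => v ω k) μ)
    (hident : ∀ k k' : Fin n,
      Measure.map (fun ω => v ω k) μ = Measure.map (fun ω => v ω k') μ)
    (hL4 : ∀ k, Integrable (fun ω => ‖v ω k‖ ^ 4) μ)
    (hmean : ∀ k, ∫ ω, v ω k ∂μ = 0)
    (hsq : ∀ k, ∫ ω, (v ω k) ^ 2 ∂μ = 0)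
    (hvar : ∀ k, ∫ ω, ‖v ω k‖ ^ 2 ∂μ = 1)
    (hkurt : ∀ k, ∫ ω, ‖v ω k‖ ^ 4 ∂μ = κ)
    (k : Fin n) :
    (∫ ω, ‖(starRingEnd ℂ) (v ω k) * (S.mulVec (v ω)) k‖ ^ 2 ∂μ)
      - ‖∫ ω, (starRingEnd ℂ) (v ω k) * (S.mulVec (v ω)) k ∂μ‖ ^ 2
    = (κ - 1) * ‖S k k‖ ^ 2 + ∑ ℓ ∈ univ.erase k, ‖S k ℓ‖ ^ 2 := by
  classical
  have hmconj : Measurable (starRingEnd ℂ) := Complex.continuous_conj.measurable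
  -- expand the estimator as a sum
  have hδ : ∀ ω, (starRingEnd ℂ) (v ω k) * (S.mulVec (v ω)) k
      = ∑ j, S k j * ((starRingEnd ℂ) (v ω k) * v ω j) := by
    intro ω
    simp only [Matrix.mulVec, dotProduct, Finset.mul_sum]
    exact Finset.sum_congr rfl fun j _ => by ring
  -- integrability of pairwise products
  have hIntPair : ∀ j, Integrable (fun ω => (starRingEnd ℂ) (v ω k) * v ω j) μ := by
    intro j
    have hg : Integrable (fun ω => 1 + ‖v ω k‖^4 + ‖v ω j‖^4) μ :=
      ((integrable_const 1).add (hL4 k)).add (hL4 j)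
    refine Integrable.mono' hg
      (((hmconj.comp (hmeas k)).mul (hmeas j)).aestronglyMeasurable)
      (Filter.Eventually.of_forall fun ω => ?_)
    have h1 : (0:ℝ) ≤ ‖v ω k‖ := norm_nonneg _
    have h2 : (0:ℝ) ≤ ‖v ω j‖ := norm_nonneg _
    rw [norm_mul, RCLike.norm_conj]
    nlinarith [sq_nonneg (‖v ω k‖ - ‖v ω j‖), sq_nonneg (‖v ω k‖^2 - 1),
      sq_nonneg (‖v ω j‖^2 - 1), sq_nonneg (‖v ω k‖^2 - ‖v ω j‖^2)]
  -- mean of conjugated entries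
  have hconjmean : ∀ j, ∫ ω, (starRingEnd ℂ) (v ω j) ∂μ = 0 := by
    intro j
    rw [integral_conj, hmean j, map_zero]
  have hEterm : ∀ j, ∫ ω, (starRingEnd ℂ) (v ω k) * v ω j ∂μ = if j = k then 1 else 0 := by
    intro j
    by_cases hj : j = k
    · subst hj
      rw [if_pos rfl,
        show (fun ω => (starRingEnd ℂ) (v ω j) * v ω j) = fun ω => ((‖v ω j‖^2 : ℝ) : ℂ) from
          funext fun ω => conj_mul_self_complex _, integral_complex_ofReal, hvar j]
      norm_num
    · rw [if_neg hj]
      have hind : IndepFun (fun ω => (starRingEnd ℂ) (v ω k)) (fun ω => v ω j) μ :=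
        (hindep.indepFun (Ne.symm hj)).comp hmconj measurable_id
      rw [indep_integral_mul_complex hind (hmconj.comp (hmeas k)).aemeasurable
        (hmeas j).aemeasurable, hconjmean k, zero_mul]
  have hEδ : ∫ ω, (starRingEnd ℂ) (v ω k) * (S.mulVec (v ω)) k ∂μ = S k k := by
    calc ∫ ω, (starRingEnd ℂ) (v ω k) * (S.mulVec (v ω)) k ∂μ
        = ∫ ω, ∑ j, S k j * ((starRingEnd ℂ) (v ω k) * v ω j) ∂μ :=
          integral_congr_ae (Filter.Eventually.of_forall fun ω => hδ ω)
      _ = ∑ j, ∫ ω, S k j * ((starRingEnd ℂ) (v ω k) * v ω j) ∂μ :=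
          integral_finset_sum _ fun j _ => (hIntPair j).const_mul _
      _ = ∑ j, S k j * (if j = k then 1 else 0) := by
          refine Finset.sum_congr rfl fun j _ => ?_
          rw [integral_const_mul, hEterm j]
      _ = S k k := by
          rw [Finset.sum_eq_single k] <;> simp +contextual
  -- integrability of the quadruple products
  have hIntQuad : ∀ j m, Integrable
      (fun ω => ((starRingEnd ℂ) (v ω k) * v ω k) * (v ω j * (starRingEnd ℂ) (v ω m))) μ := by
    intro j m
    have hg : Integrable (fun ω => 1 + ‖v ω k‖^4 + (‖v ω j‖^4 + ‖v ω m‖^4)) μ :=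
      ((integrable_const 1).add (hL4 k)).add ((hL4 j).add (hL4 m))
    refine Integrable.mono' hg
      ((((hmconj.comp (hmeas k)).mul (hmeas k)).mul
        ((hmeas j).mul (hmconj.comp (hmeas m)))).aestronglyMeasurable)
      (Filter.Eventually.of_forall fun ω => ?_)
    have h1 : (0:ℝ) ≤ ‖v ω k‖ := norm_nonneg _
    have h2 : (0:ℝ) ≤ ‖v ω j‖ := norm_nonneg _
    have h3 : (0:ℝ) ≤ ‖v ω m‖ := norm_nonneg _
    rw [norm_mul, norm_mul, norm_mul, RCLike.norm_conj, RCLike.norm_conj]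
    nlinarith [sq_nonneg (‖v ω k‖ * ‖v ω k‖ - ‖v ω j‖ * ‖v ω m‖),
      sq_nonneg (‖v ω j‖ * ‖v ω j‖ - ‖v ω m‖ * ‖v ω m‖),
      mul_nonneg h2 h3, mul_nonneg h1 h1, mul_nonneg (mul_nonneg h1 h1) (mul_nonneg h2 h3)]
  -- values of the quadruple integrals
  have hquad : ∀ j m, ∫ ω, ((starRingEnd ℂ) (v ω k) * v ω k) * (v ω j * (starRingEnd ℂ) (v ω m)) ∂μ
      = if j = m then (if j = k then (κ:ℂ) else 1) else 0 := by
    intro j m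
    by_cases hjm : j = m
    · subst hjm
      rw [if_pos rfl]
      by_cases hjk : j = k
      · subst hjk
        rw [if_pos rfl]
        have hp : ∀ ω, ((starRingEnd ℂ) (v ω j) * v ω j) * (v ω j * (starRingEnd ℂ) (v ω j))
            = ((‖v ω j‖^4 : ℝ) : ℂ) := by
          intro ω
          rw [show ((starRingEnd ℂ) (v ω j) * v ω j) * (v ω j * (starRingEnd ℂ) (v ω j))
              = ((starRingEnd ℂ) (v ω j) * v ω j) * ((starRingEnd ℂ) (v ω j) * v ω j) by ring,
            conj_mul_self_complex]
          push_cast; ring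
        rw [integral_congr_ae (Filter.Eventually.of_forall hp), integral_complex_ofReal, hkurt j]
      · rw [if_neg hjk]
        have hind : IndepFun (fun ω => (starRingEnd ℂ) (v ω k) * v ω k)
            (fun ω => v ω j * (starRingEnd ℂ) (v ω j)) μ :=
          (hindep.indepFun (fun h => hjk h.symm)).comp
            (hmconj.mul measurable_id) (measurable_id.mul hmconj)
        rw [indep_integral_mul_complex hind
          (((hmconj.comp (hmeas k)).mul (hmeas k)).aemeasurable)
          (((hmeas j).mul (hmconj.comp (hmeas j))).aemeasurable),
          show (fun ω => (starRingEnd ℂ) (v ω k) * v ω k) = fun ω => ((‖v ω k‖^2 : ℝ) : ℂ) from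
            funext fun ω => conj_mul_self_complex _,
          show (fun ω => v ω j * (starRingEnd ℂ) (v ω j)) = fun ω => ((‖v ω j‖^2 : ℝ) : ℂ) from
            funext fun ω => by rw [mul_comm]; exact conj_mul_self_complex _,
          integral_complex_ofReal, integral_complex_ofReal, hvar k, hvar j]
        norm_num
    · rw [if_neg hjm]
      by_cases hjk : j = k
      · -- j = k, m ≠ k : factor off conj (v m)
        subst hjk
        have hp : ∀ ω, ((starRingEnd ℂ) (v ω j) * v ω j) * (v ω j * (starRingEnd ℂ) (v ω m))
            = ((starRingEnd ℂ) (v ω j) * v ω j * v ω j) * (starRingEnd ℂ) (v ω m) :=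
          fun ω => by ring
        have hind : IndepFun (fun ω => (starRingEnd ℂ) (v ω j) * v ω j * v ω j)
            (fun ω => (starRingEnd ℂ) (v ω m)) μ :=
          (hindep.indepFun hjm).comp ((hmconj.mul measurable_id).mul measurable_id) hmconj
        rw [integral_congr_ae (Filter.Eventually.of_forall hp),
          indep_integral_mul_complex hind
            (((hmconj.comp (hmeas j)).mul (hmeas j)).mul (hmeas j)).aemeasurable
            (hmconj.comp (hmeas m)).aemeasurable,
          hconjmean m, mul_zero]
      · by_cases hmk : m = k
        · -- m = k, j ≠ k : factor off v j
          subst hmk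
          have hp : ∀ ω, ((starRingEnd ℂ) (v ω m) * v ω m) * (v ω j * (starRingEnd ℂ) (v ω m))
              = ((starRingEnd ℂ) (v ω m) * v ω m * (starRingEnd ℂ) (v ω m)) * v ω j :=
            fun ω => by ring
          have hind : IndepFun (fun ω => (starRingEnd ℂ) (v ω m) * v ω m * (starRingEnd ℂ) (v ω m))
              (fun ω => v ω j) μ :=
            (hindep.indepFun (fun h => hjm h.symm)).comp
              ((hmconj.mul measurable_id).mul hmconj) measurable_id
          rw [integral_congr_ae (Filter.Eventually.of_forall hp),
            indep_integral_mul_complex hind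
              (((hmconj.comp (hmeas m)).mul (hmeas m)).mul (hmconj.comp (hmeas m))).aemeasurable
              (hmeas j).aemeasurable,
            hmean j, mul_zero]
        · -- j, m, k pairwise distinct : factor off v j
          have hp : ∀ ω, ((starRingEnd ℂ) (v ω k) * v ω k) * (v ω j * (starRingEnd ℂ) (v ω m))
              = ((starRingEnd ℂ) (v ω k) * v ω k * (starRingEnd ℂ) (v ω m)) * v ω j :=
            fun ω => by ring
          have hindpair : IndepFun (fun ω => (v ω k, v ω m)) (fun ω => v ω j) μ :=
            hindep.indepFun_prodMk hmeas k m j (fun h => hjk h.symm) (fun h => hjm h.symm)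
          have hφ : Measurable (fun p : ℂ × ℂ => (starRingEnd ℂ) p.1 * p.1 * (starRingEnd ℂ) p.2) :=
            ((hmconj.comp measurable_fst).mul measurable_fst).mul (hmconj.comp measurable_snd)
          have hind : IndepFun (fun ω => (starRingEnd ℂ) (v ω k) * v ω k * (starRingEnd ℂ) (v ω m))
              (fun ω => v ω j) μ := hindpair.comp hφ measurable_id
          rw [integral_congr_ae (Filter.Eventually.of_forall hp),
            indep_integral_mul_complex hind
              (((hmconj.comp (hmeas k)).mul (hmeas k)).mul (hmconj.comp (hmeas m))).aemeasurable
              (hmeas j).aemeasurable,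
            hmean j, mul_zero]
  -- second moment
  have hSecond : ((∫ ω, ‖(starRingEnd ℂ) (v ω k) * (S.mulVec (v ω)) k‖ ^ 2 ∂μ : ℝ) : ℂ)
      = (κ:ℂ) * ((‖S k k‖^2 : ℝ) : ℂ) + ∑ j ∈ univ.erase k, ((‖S k j‖^2 : ℝ) : ℂ) := by
    have hexp : ∀ ω, ((‖(starRingEnd ℂ) (v ω k) * (S.mulVec (v ω)) k‖ ^ 2 : ℝ) : ℂ)
        = ∑ j, ∑ m, (S k j * (starRingEnd ℂ) (S k m)) *
            (((starRingEnd ℂ) (v ω k) * v ω k) * (v ω j * (starRingEnd ℂ) (v ω m))) := by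
      intro ω
      rw [← conj_mul_self_complex, hδ ω, map_sum, Finset.sum_mul_sum, Finset.sum_comm]
      refine Finset.sum_congr rfl fun j _ => Finset.sum_congr rfl fun m _ => ?_
      simp only [map_mul, Complex.conj_conj]
      ring
    rw [← integral_complex_ofReal, integral_congr_ae (Filter.Eventually.of_forall hexp),
      integral_finset_sum _ fun j _ => integrable_finset_sum _
        fun m _ => ((hIntQuad j m).const_mul _)]
    have hrow : ∀ j : Fin n, (∫ ω, ∑ m, (S k j * (starRingEnd ℂ) (S k m)) *
        (((starRingEnd ℂ) (v ω k) * v ω k) * (v ω j * (starRingEnd ℂ) (v ω m))) ∂μ)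
        = (S k j * (starRingEnd ℂ) (S k j)) * (if j = k then (κ:ℂ) else 1) := by
      intro j
      rw [integral_finset_sum _ fun m _ => (hIntQuad j m).const_mul _]
      rw [Finset.sum_eq_single j]
      · rw [integral_const_mul, hquad j j, if_pos rfl]
      · intro m _ hmj
        rw [integral_const_mul, hquad j m, if_neg (fun h => hmj h.symm), mul_zero]
      · intro h; exact absurd (mem_univ j) h
    rw [Finset.sum_congr rfl fun j _ => hrow j, ← Finset.sum_erase_add _ _ (mem_univ k),
      if_pos rfl]
    have hoff : ∀ j ∈ univ.erase k, (S k j * (starRingEnd ℂ) (S k j)) *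
        (if j = k then (κ:ℂ) else 1) = ((‖S k j‖^2 : ℝ) : ℂ) := by
      intro j hj
      rw [if_neg (Finset.ne_of_mem_erase hj), mul_one, mul_comm, conj_mul_self_complex]
    rw [Finset.sum_congr rfl hoff]
    rw [mul_comm (S k k), conj_mul_self_complex]
    ring
  -- put everything together
  have hA : ∫ ω, ‖(starRingEnd ℂ) (v ω k) * (S.mulVec (v ω)) k‖ ^ 2 ∂μ
      = κ * ‖S k k‖^2 + ∑ j ∈ univ.erase k, ‖S k j‖^2 := by
    have := hSecond
    rw [show (κ:ℂ) * ((‖S k k‖^2 : ℝ) : ℂ) + ∑ j ∈ univ.erase k, ((‖S k j‖^2 : ℝ) : ℂ)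
        = ((κ * ‖S k k‖^2 + ∑ j ∈ univ.erase k, ‖S k j‖^2 : ℝ) : ℂ) by push_cast; ring] at this
    exact_mod_cast this
  rw [hA, hEδ]
  ring
end

section
/- Let M be Hermitian positive-definite and λ > 0. Then every diagonal entry of (M + λI)^{-1} M (M + λI)^{-1} is strictly less than the corresponding diagonal entry of M^{-1}. -/
open Matrix
open scoped ComplexOrder

set_option maxHeartbeats 1000000

private lemma posdef_conj {n : ℕ} {A B : Matrix (Fin n) (Fin n) ℂ}
    (hA : A.PosDef) (hB : IsUnit B) : (Bᴴ * A * B).PosDef := by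
  refine PosDef.of_dotProduct_mulVec_pos (isHermitian_conjTranspose_mul_mul B hA.1) fun x hx => ?_
  have hBx : B *ᵥ x ≠ 0 :=
    (Matrix.mulVec_injective_iff_isUnit.mpr hB |>.ne_iff' (by simp)).2 hx
  simpa only [star_mulVec, dotProduct_mulVec, vecMul_vecMul] using hA.dotProduct_mulVec_pos hBx

private lemma smul_one_diag {n : ℕ} (c : ℂ) :
    c • (1 : Matrix (Fin n) (Fin n) ℂ) = diagonal (fun _ => c) := by
  ext i j
  by_cases h : i = j <;> simp [h, Matrix.one_apply, diagonal_apply]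

/-- Strict diagonal shrinkage under Tikhonov regularization: every diagonal
entry of `(M+λI)⁻¹ M (M+λI)⁻¹` is strictly less than the corresponding
diagonal entry of `M⁻¹` (diagonal entries of these Hermitian matrices are
real, so the comparison is between their real parts). -/
theorem tikhonov_diagonal_shrinkage
    {n : ℕ} (M : Matrix (Fin n) (Fin n) ℂ) (hM : M.PosDef)
    (lam : ℝ) (hlam : 0 < lam) (k : Fin n) :
    (((M + (lam : ℂ) • (1 : Matrix (Fin n) (Fin n) ℂ))⁻¹ * M
        * (M + (lam : ℂ) • (1 : Matrix (Fin n) (Fin n) ℂ))⁻¹) k k).re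
      < (M⁻¹ k k).re := by
  set S : Matrix (Fin n) (Fin n) ℂ := M + (lam : ℂ) • 1 with hSdef
  clear_value S
  have hlam' : (0 : ℂ) < (lam : ℂ) := by exact_mod_cast hlam
  have hsm : ((lam : ℂ) • (1 : Matrix (Fin n) (Fin n) ℂ)).PosDef := by
    rw [smul_one_diag]
    exact Matrix.PosDef.diagonal fun _ => hlam'
  have hS : S.PosDef := hSdef ▸ hM.add hsm
  have hMu : IsUnit M.det := isUnit_iff_isUnit_det M |>.mp hM.isUnit
  have hSu : IsUnit S.det := isUnit_iff_isUnit_det S |>.mp hS.isUnit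
  have hMM : M * M⁻¹ = 1 := mul_nonsing_inv M hMu
  have hMM' : M⁻¹ * M = 1 := nonsing_inv_mul M hMu
  have hSS : S * S⁻¹ = 1 := mul_nonsing_inv S hSu
  have hSS' : S⁻¹ * S = 1 := nonsing_inv_mul S hSu
  -- the inner positive-definite matrix
  set A : Matrix (Fin n) (Fin n) ℂ :=
    ((2 * lam : ℝ) : ℂ) • 1 + ((lam ^ 2 : ℝ) : ℂ) • M⁻¹ with hAdef
  have hA : A.PosDef := by
    have h1 : (((2 * lam : ℝ) : ℂ) • (1 : Matrix (Fin n) (Fin n) ℂ)).PosDef := by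
      rw [smul_one_diag]
      exact Matrix.PosDef.diagonal fun _ => by
        exact_mod_cast (by linarith : (0:ℝ) < 2 * lam)
    have h2 : (((lam ^ 2 : ℝ) : ℂ) • M⁻¹).PosDef := by
      have hB : IsUnit ((lam : ℂ) • (1 : Matrix (Fin n) (Fin n) ℂ)) := hsm.isUnit
      have := posdef_conj hM.inv hB
      have heq : ((lam : ℂ) • (1 : Matrix (Fin n) (Fin n) ℂ))ᴴ * M⁻¹
            * ((lam : ℂ) • (1 : Matrix (Fin n) (Fin n) ℂ))
          = ((lam ^ 2 : ℝ) : ℂ) • M⁻¹ := by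
        simp only [conjTranspose_smul, conjTranspose_one, Matrix.smul_mul,
          Matrix.mul_smul, Matrix.one_mul, Matrix.mul_one, smul_smul,
          Complex.star_def, Complex.conj_ofReal]
        push_cast
        rw [pow_two]
      rwa [heq] at this
    exact h1.add h2
  clear_value A
  -- the key algebraic identity : S * M⁻¹ * S = M + A
  have hkey : S * M⁻¹ * S = M + A := by
    have h1 : S * M⁻¹ = 1 + (lam : ℂ) • M⁻¹ := by
      rw [hSdef, Matrix.add_mul, Matrix.smul_mul, Matrix.one_mul, hMM]
    rw [h1, hSdef, hAdef, Matrix.add_mul, Matrix.one_mul, Matrix.mul_add,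
      Matrix.smul_mul, Matrix.mul_smul, hMM']
    simp only [Matrix.mul_one, smul_smul]
    push_cast
    module
  -- hence M⁻¹ - S⁻¹ M S⁻¹ = S⁻¹ * A * S⁻¹ is positive definite
  have hiden : M⁻¹ - S⁻¹ * M * S⁻¹ = S⁻¹ * A * S⁻¹ := by
    have h2 : M⁻¹ = S⁻¹ * M * S⁻¹ + S⁻¹ * A * S⁻¹ := by
      calc M⁻¹ = (S⁻¹ * S) * M⁻¹ * (S * S⁻¹) := by
            rw [hSS, hSS', Matrix.one_mul, Matrix.mul_one]
        _ = S⁻¹ * (S * M⁻¹ * S) * S⁻¹ := by noncomm_ring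
        _ = S⁻¹ * (M + A) * S⁻¹ := by rw [hkey]
        _ = S⁻¹ * M * S⁻¹ + S⁻¹ * A * S⁻¹ := by noncomm_ring
    rw [h2]
    abel
  have hD : (M⁻¹ - S⁻¹ * M * S⁻¹).PosDef := by
    rw [hiden]
    nth_rewrite 1 [show S⁻¹ = (S⁻¹)ᴴ from hS.inv.isHermitian.symm]
    exact posdef_conj hA (by simpa using hS.isUnit)
  -- evaluate the quadratic form at the basis vector `Pi.single k 1`
  have hx : (Pi.single k 1 : Fin n → ℂ) ≠ 0 := by
    intro h
    have := congrFun h k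
    simp at this
  have hpos := hD.dotProduct_mulVec_pos hx
  have hentry : dotProduct (star (Pi.single k 1 : Fin n → ℂ))
      ((M⁻¹ - S⁻¹ * M * S⁻¹) *ᵥ Pi.single k 1) = (M⁻¹ - S⁻¹ * M * S⁻¹) k k := by
    rw [mulVec_single]
    simp [dotProduct, Pi.single_apply, apply_ite, mul_comm]
  rw [hentry] at hpos
  have h3 := Complex.lt_def.mp hpos |>.1
  simp only [Matrix.sub_apply, Complex.sub_re, Complex.zero_re] at h3
  linarith
end
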